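/- Error equation for the stabilizer norms: with e_λ = Q_hλ - λ_h, e_q = ℚ_h q - q_h, e_s = Q_h s - s_h (where the exact dual variables satisfy λ = 0, q = 0, s = 0), the PDWG error functions satisfy s₁(e_λ, e_q; e_λ, e_q) + s₂(e_s, e_s) = ⟨u - 𝒬_h u, εn(e_{λ,0} - e_{λ,b}) + (e_{q,b} - e_{q,0})×n⟩_{∂𝒯_h}, and consequently ⫼(e_λ, e_q)⫼ + ⫼e_s⫼ ≲ h^{k+θ}‖u‖_{k+θ} provided u ∈ [H^{k+θ}(Ω)]³ with θ ∈ (1/2, 1]. -/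
import Mathlib


open scoped RealInnerProductSpace

/-- Error equation for the stabilizer norms: with
`e_λ = Q_hλ - λ_h`, `e_q = ℚ_h q - q_h`, `e_s = Q_h s - s_h` (the exact dual
variables satisfying `λ = 0, q = 0, s = 0`), the PDWG error functions satisfy
`s₁(e_λ, e_q; e_λ, e_q) + s₂(e_s, e_s)
   = ⟨u - 𝒬_h u, εn(e_{λ,0} - e_{λ,b}) + (e_{q,b} - e_{q,0})×n⟩_{∂𝒯_h}`,
and consequently `⫼(e_λ, e_q)⫼ + ⫼e_s⫼ ≲ h^{k+θ}‖u‖_{k+θ}` provided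
`u ∈ [H^{k+θ}(Ω)]³` with `θ ∈ (1/2, 1]`.

Abstraction: `s1, s2` are the stabilizers, `B : (V × Sh) → (Mh × Wh) → ℝ` the PDWG
bilinear form, and `ℓ x = ⟨u - 𝒬_h u, εn(φ₀-φ_b)+(ψ_b-ψ₀)×n⟩_{∂𝒯_h}` the boundary
pairing of the consistency error at the test pair `x = (φ, ψ)`; `hErr1, hErr2` are
the two error equations, and `hTrace` the standard trace/approximation estimate, with
`Unorm = ‖u‖_{k+θ}`. -/
theorem stmt_15
    {V Sh Mh Wh : Type*}
    [NormedAddCommGroup V] [InnerProductSpace ℝ V]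
    (s1 : Mh × Wh → Mh × Wh → ℝ) (s2 : Sh → Sh → ℝ)
    (B : V × Sh → Mh × Wh → ℝ) (ℓ : Mh × Wh → ℝ)
    (elam : Mh) (eq : Wh) (es : Sh) (eu : V)
    (hs1 : ∀ x, 0 ≤ s1 x x) (hs2 : ∀ r, 0 ≤ s2 r r)
    -- first error equation
    (hErr1 : ∀ x : Mh × Wh, s1 (elam, eq) x + B (eu, es) x = ℓ x)
    -- second error equation
    (hErr2 : ∀ (v : V) (r : Sh), -s2 es r + B (v, r) (elam, eq) = 0)
    (k : ℕ) (θ h Unorm : ℝ)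
    (hθ : 1 / 2 < θ ∧ θ ≤ 1) (hh : 0 < h) (hU : 0 ≤ Unorm)
    -- trace/approximation estimate for the boundary pairing of u - 𝒬_h u
    (C0 : ℝ) (hC0 : 0 < C0)
    (hTrace : ∀ x : Mh × Wh,
      |ℓ x| ≤ C0 * h ^ ((k : ℝ) + θ) * Unorm * Real.sqrt (s1 x x)) :
    s1 (elam, eq) (elam, eq) + s2 es es = ℓ (elam, eq) ∧
      ∃ C : ℝ, 0 < C ∧
        Real.sqrt (s1 (elam, eq) (elam, eq)) + Real.sqrt (s2 es es)
          ≤ C * h ^ ((k : ℝ) + θ) * Unorm := by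
  have hB := hErr2 eu es
  have hmain : s1 (elam, eq) (elam, eq) + s2 es es = ℓ (elam, eq) := by
    have h1 := hErr1 (elam, eq)
    linarith
  refine ⟨hmain, 2 * C0, by linarith, ?_⟩
  set S := s1 (elam, eq) (elam, eq) + s2 es es with hS
  have hS0 : 0 ≤ S := add_nonneg (hs1 _) (hs2 _)
  have hA : 0 ≤ C0 * h ^ ((k : ℝ) + θ) * Unorm :=
    mul_nonneg (mul_nonneg hC0.le (Real.rpow_nonneg hh.le _)) hU
  have hsq1 : Real.sqrt (s1 (elam, eq) (elam, eq)) ≤ Real.sqrt S :=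
    Real.sqrt_le_sqrt (by linarith [hs2 es])
  have hsq2 : Real.sqrt (s2 es es) ≤ Real.sqrt S :=
    Real.sqrt_le_sqrt (by linarith [hs1 (elam, eq)])
  have hSle : S ≤ C0 * h ^ ((k : ℝ) + θ) * Unorm * Real.sqrt S := by
    calc S = ℓ (elam, eq) := hmain
    _ ≤ |ℓ (elam, eq)| := le_abs_self _
    _ ≤ C0 * h ^ ((k : ℝ) + θ) * Unorm * Real.sqrt (s1 (elam, eq) (elam, eq)) :=
        hTrace _
    _ ≤ C0 * h ^ ((k : ℝ) + θ) * Unorm * Real.sqrt S := by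
        exact mul_le_mul_of_nonneg_left hsq1 hA
  have hsqS : Real.sqrt S ≤ C0 * h ^ ((k : ℝ) + θ) * Unorm := by
    rcases eq_or_lt_of_le (Real.sqrt_nonneg S) with h0 | h0
    · linarith [h0.symm]
    · have : Real.sqrt S * Real.sqrt S ≤ C0 * h ^ ((k : ℝ) + θ) * Unorm * Real.sqrt S := by
        rw [Real.mul_self_sqrt hS0]; exact hSle
      exact le_of_mul_le_mul_right this h0
  calc Real.sqrt (s1 (elam, eq) (elam, eq)) + Real.sqrt (s2 es es)
      ≤ Real.sqrt S + Real.sqrt S := add_le_add hsq1 hsq2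
    _ = 2 * Real.sqrt S := by ring
    _ ≤ 2 * (C0 * h ^ ((k : ℝ) + θ) * Unorm) := by linarith
    _ = 2 * C0 * h ^ ((k : ℝ) + θ) * Unorm := by ring
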